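/- arXiv:2006.08465 — 6 statements merged into one kernel-verified Lean document; each statement's English description precedes it below -/
import Mathlib

section
/- Let X ⊆ ℝⁿ, let f : ℝⁿ → ℝⁿ be continuous (the closed-loop vector field), let X₀ ⊆ X be the initial set and X_u ⊆ X the unsafe set. Suppose B : ℝⁿ → ℝ is continuously differentiable and there is an extended class-K function β such that: (i) B(x) ≤ 0 for all x ∈ X₀; (ii) B(x) > 0 for all x ∈ X_u; (iii) ⟨∇B(x), f(x)⟩ ≤ −β(B(x)) for all x ∈ X. Then for every differentiable curve x : [0,∞) → ℝⁿ with x'(t) = f(x(t)) and x(t) ∈ X for all t ≥ 0 and x(0) ∈ X₀, one has x(T) ∉ X_u for every T ≥ 0. -/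
open scoped RealInnerProductSpace

/-- An extended class-K function: a strictly increasing continuous function
`β : ℝ → ℝ` with `β 0 = 0`. -/
def ExtendedClassK (β : ℝ → ℝ) : Prop :=
  Continuous β ∧ StrictMono β ∧ β 0 = 0

/-- **Safe control theorem (Lemma 1).** If `B` is a barrier function for the
closed-loop system `ẋ = f(x)` on `X` with initial set `X₀` and unsafe set `Xu`,
then every trajectory starting in `X₀` and staying in `X` never enters `Xu`. -/
theorem safe_control_theorem {n : ℕ}
    (X X0 Xu : Set (EuclideanSpace ℝ (Fin n)))
    (f : EuclideanSpace ℝ (Fin n) → EuclideanSpace ℝ (Fin n))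
    (hf : Continuous f) (hX0 : X0 ⊆ X) (hXu : Xu ⊆ X)
    (B : EuclideanSpace ℝ (Fin n) → ℝ) (hB : ContDiff ℝ 1 B)
    (β : ℝ → ℝ) (hβ : ExtendedClassK β)
    (hinit : ∀ x ∈ X0, B x ≤ 0)
    (hunsafe : ∀ x ∈ Xu, 0 < B x)
    (hdecr : ∀ x ∈ X, ⟪gradient B x, f x⟫ ≤ -β (B x)) :
    ∀ x : ℝ → EuclideanSpace ℝ (Fin n),
      (∀ t : ℝ, 0 ≤ t → HasDerivAt x (f (x t)) t) →
      (∀ t : ℝ, 0 ≤ t → x t ∈ X) →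
      x 0 ∈ X0 →
      ∀ T : ℝ, 0 ≤ T → x T ∉ Xu := by
  obtain ⟨hβc, hβm, hβ0⟩ := hβ
  intro x hx hxX hx0 T hT hTu
  have hBT : 0 < B (x T) := hunsafe _ hTu
  -- continuous extension g
  set g : ℝ → ℝ := fun t => B (x (max t 0)) with hgdef
  have hxc : Continuous fun t : ℝ => x (max t 0) := by
    rw [continuous_iff_continuousAt]
    intro t
    have hm : ContinuousAt (fun t : ℝ => max t 0) t :=
      (continuous_id.max continuous_const).continuousAt
    exact ContinuousAt.comp ((hx _ (le_max_right t 0)).continuousAt) hm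
  have hgc : Continuous g := hB.continuous.comp hxc
  -- g agrees with B ∘ x on nonneg times
  have hgeq : ∀ t : ℝ, 0 ≤ t → g t = B (x t) := by
    intro t ht; simp [hgdef, max_eq_left ht]
  -- derivative of g at positive times
  have hderiv : ∀ t : ℝ, 0 < t → HasDerivAt g (⟪gradient B (x t), f (x t)⟫) t := by
    intro t ht
    have h1 : HasGradientAt B (gradient B (x t)) (x t) :=
      (hB.differentiable one_ne_zero (x t)).hasGradientAt
    have h2 : HasDerivAt (fun s => B (x s)) (⟪gradient B (x t), f (x t)⟫) t := by
      have := h1.hasFDerivAt.comp_hasDerivAt t (hx t ht.le)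
      simp [InnerProductSpace.toDual_apply_apply] at this ⊢; exact this
    refine h2.congr_of_eventuallyEq ?_
    filter_upwards [eventually_gt_nhds ht] with s hs
    exact hgeq s hs.le
  -- the set of "safe" times
  set S : Set ℝ := Set.Icc 0 T ∩ {t | g t ≤ 0} with hSdef
  have hScl : IsClosed S := isClosed_Icc.inter (isClosed_le hgc continuous_const)
  have h0S : (0 : ℝ) ∈ S := by
    refine ⟨⟨le_rfl, hT⟩, ?_⟩
    simpa [hgeq 0 le_rfl] using hinit _ hx0
  have hSbdd : BddAbove S := ⟨T, fun t ht => ht.1.2⟩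
  set s := sSup S with hsdef
  have hsS : s ∈ S := hScl.csSup_mem ⟨0, h0S⟩ hSbdd
  have hsT : s ≤ T := hsS.1.2
  have hs0 : 0 ≤ s := hsS.1.1
  have hTnS : T ∉ S := by
    intro h
    have := h.2
    rw [Set.mem_setOf_eq, hgeq T hT] at this
    exact absurd hBT (not_lt.2 this)
  have hsltT : s < T := lt_of_le_of_ne hsT (fun h => hTnS (h ▸ hsS))
  -- on (s, T], g is positive
  have hpos : ∀ t : ℝ, s < t → t ≤ T → 0 < g t := by
    intro t hst htT
    by_contra h
    have htS : t ∈ S := ⟨⟨hs0.trans hst.le, htT⟩, not_lt.1 h⟩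
    exact absurd (le_csSup hSbdd htS) (not_le.2 hst)
  -- strict anti on [s, T]
  have hanti : StrictAntiOn g (Set.Icc s T) := by
    refine strictAntiOn_of_deriv_neg (convex_Icc s T) (hgc.continuousOn) ?_
    intro t ht
    rw [interior_Icc] at ht
    have ht0 : 0 < t := lt_of_le_of_lt hs0 ht.1
    have hd := hderiv t ht0
    rw [hd.deriv]
    have hgt : 0 < g t := hpos t ht.1 ht.2.le
    have hbpos : 0 < β (B (x t)) := by
      have : 0 < β (g t) := by rw [← hβ0]; exact hβm hgt
      rwa [hgeq t ht0.le] at this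
    calc ⟪gradient B (x t), f (x t)⟫ ≤ -β (B (x t)) := hdecr _ (hxX t ht0.le)
      _ < 0 := by linarith
  have : g T < g s := hanti ⟨le_rfl, hsT⟩ ⟨hsT, le_rfl⟩ hsltT
  have hgs : g s ≤ 0 := hsS.2
  rw [hgeq T hT] at this
  linarith
end

section
/- Let β : ℝ → ℝ be strictly increasing with β(0) = 0, and let h : [0,∞) → ℝ be differentiable with h'(t) ≤ −β(h(t)) for all t ≥ 0. If h(0) ≤ 0, then h(t) ≤ 0 for all t ≥ 0. -/
/-- **Scalar comparison lemma.** If `β : ℝ → ℝ` is strictly increasing with `β 0 = 0`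
and `h : [0,∞) → ℝ` is differentiable with `h'(t) ≤ -β (h t)` for all `t ≥ 0`, then
`h 0 ≤ 0` implies `h t ≤ 0` for all `t ≥ 0`. -/
theorem scalar_comparison_nonpos_invariant
    (β : ℝ → ℝ) (hβ : StrictMono β) (hβ0 : β 0 = 0)
    (h h' : ℝ → ℝ)
    (hderiv : ∀ t : ℝ, 0 ≤ t → HasDerivAt h (h' t) t)
    (hineq : ∀ t : ℝ, 0 ≤ t → h' t ≤ -β (h t))
    (h0 : h 0 ≤ 0) :
    ∀ t : ℝ, 0 ≤ t → h t ≤ 0 := by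
  intro t ht
  by_contra hpos
  push_neg at hpos
  -- h is continuous on [0, t]
  have hcont : ContinuousOn h (Set.Icc 0 t) := fun u hu =>
    ((hderiv u hu.1).continuousAt).continuousWithinAt
  set S : Set ℝ := {u | u ∈ Set.Icc 0 t ∧ h u ≤ 0} with hS
  have h0S : (0 : ℝ) ∈ S := ⟨⟨le_refl 0, ht⟩, h0⟩
  have hSne : S.Nonempty := ⟨0, h0S⟩
  have hSbdd : BddAbove S := ⟨t, fun u hu => hu.1.2⟩
  have hSclosed : IsClosed S := by
    have : S = Set.Icc 0 t ∩ h ⁻¹' Set.Iic 0 := by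
      ext u; simp [hS, Set.mem_inter_iff, and_comm]
    rw [this]
    exact hcont.preimage_isClosed_of_isClosed isClosed_Icc isClosed_Iic
  set s := sSup S with hs
  have hsS : s ∈ S := hSclosed.csSup_mem hSne hSbdd
  have hs0 : 0 ≤ s := hsS.1.1
  have hst : s ≤ t := hsS.1.2
  have hhs : h s ≤ 0 := hsS.2
  have hslt : s < t := lt_of_le_of_ne hst (fun heq => by
    rw [heq] at hhs; linarith)
  -- every point in (s, t] has h > 0
  have hgt : ∀ u ∈ Set.Ioc s t, 0 < h u := by
    intro u hu
    by_contra hle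
    push_neg at hle
    have : u ∈ S := ⟨⟨le_trans hs0 hu.1.le, hu.2⟩, hle⟩
    exact absurd (le_csSup hSbdd this) (not_le.mpr hu.1)
  -- h is strictly antitone on [s, t]
  have hanti : StrictAntiOn h (Set.Icc s t) := by
    apply StrictAntiOn.mono (s := Set.Icc s t) ?_ (le_refl _)
    apply strictAntiOn_of_hasDerivWithinAt_neg (f := h) (f' := h')
      (convex_Icc s t)
      (hcont.mono (Set.Icc_subset_Icc hs0 (le_refl t)))
    · intro u hu
      rw [interior_Icc] at hu
      exact ((hderiv u (le_trans hs0 hu.1.le)).hasDerivWithinAt)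
    · intro u hu
      rw [interior_Icc] at hu
      have h1 : h' u ≤ -β (h u) := hineq u (le_trans hs0 hu.1.le)
      have h2 : 0 < β (h u) := by
        rw [← hβ0]; exact hβ (hgt u ⟨hu.1, hu.2.le⟩)
      linarith
  have := hanti (Set.left_mem_Icc.mpr hst) (Set.right_mem_Icc.mpr hst) hslt
  linarith
end

section
/- Let X ⊆ ℝⁿ, let f : ℝⁿ → ℝⁿ be continuous, let B : ℝⁿ → ℝ be continuously differentiable, and let β be an extended class-K function with ⟨∇B(x), f(x)⟩ ≤ −β(B(x)) for all x ∈ X. Then for every differentiable curve x : [0,∞) → ℝⁿ with x'(t) = f(x(t)) and x(t) ∈ X for all t ≥ 0 and B(x(0)) ≤ 0, one has B(x(t)) ≤ 0 for all t ≥ 0. -/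
open scoped RealInnerProductSpace

/-- **Forward invariance of the zero sublevel set.** If `⟪∇B x, f x⟫ ≤ -β (B x)` on `X`
for an extended class-K function `β`, then along every trajectory of `ẋ = f(x)` that
remains in `X`, `B(x 0) ≤ 0` implies `B(x t) ≤ 0` for all `t ≥ 0`. -/
theorem sublevel_forward_invariant {n : ℕ}
    (X : Set (EuclideanSpace ℝ (Fin n)))
    (f : EuclideanSpace ℝ (Fin n) → EuclideanSpace ℝ (Fin n))
    (hf : Continuous f)
    (B : EuclideanSpace ℝ (Fin n) → ℝ) (hB : ContDiff ℝ 1 B)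
    (β : ℝ → ℝ) (hβ : ExtendedClassK β)
    (hdecr : ∀ x ∈ X, ⟪gradient B x, f x⟫ ≤ -β (B x)) :
    ∀ x : ℝ → EuclideanSpace ℝ (Fin n),
      (∀ t : ℝ, 0 ≤ t → HasDerivAt x (f (x t)) t) →
      (∀ t : ℝ, 0 ≤ t → x t ∈ X) →
      B (x 0) ≤ 0 →
      ∀ t : ℝ, 0 ≤ t → B (x t) ≤ 0 := by
  intro x hx hxX h0 t ht
  by_contra hpos
  push_neg at hpos
  set g : ℝ → ℝ := fun s => B (x s) with hg
  -- derivative of g for s ≥ 0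
  have hderiv : ∀ s : ℝ, 0 ≤ s → HasDerivAt g ⟪gradient B (x s), f (x s)⟫ s := by
    intro s hs
    have hgrad : HasGradientAt B (gradient B (x s)) (x s) :=
      (hB.differentiable one_ne_zero (x s)).hasGradientAt
    have hfd := hgrad.hasFDerivAt
    have := hfd.comp_hasDerivAt s (hx s hs)
    simp [InnerProductSpace.toDual_apply_apply] at this ⊢
    exact this
  have hgcont : ContinuousOn g (Set.Icc 0 t) := by
    intro s hs
    exact ((hderiv s hs.1).continuousAt).continuousWithinAt
  -- the set of times ≤ t where g ≤ 0
  set S : Set ℝ := {s | s ∈ Set.Icc (0:ℝ) t ∧ g s ≤ 0} with hS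
  have hSne : S.Nonempty := ⟨0, ⟨le_rfl, ht⟩, h0⟩
  have hSbdd : BddAbove S := ⟨t, fun s hs => hs.1.2⟩
  set t₀ : ℝ := sSup S with ht₀
  have hSclosed : IsClosed S := by
    have : S = Set.Icc 0 t ∩ (g ⁻¹' Set.Iic 0) ∩ Set.Icc 0 t := by
      ext s; simp [hS, Set.mem_inter_iff]; tauto
    rw [this]
    exact (hgcont.preimage_isClosed_of_isClosed isClosed_Icc isClosed_Iic).inter isClosed_Icc
  have ht₀S : t₀ ∈ S := hSclosed.csSup_mem hSne hSbdd
  have ht₀0 : 0 ≤ t₀ := ht₀S.1.1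
  have ht₀t : t₀ ≤ t := ht₀S.1.2
  have hgt₀ : g t₀ ≤ 0 := ht₀S.2
  -- for s in (t₀, t], g s > 0
  have hposafter : ∀ s, t₀ < s → s ≤ t → 0 < g s := by
    intro s hs1 hs2
    by_contra h
    push_neg at h
    have : s ∈ S := ⟨⟨le_trans ht₀0 hs1.le, hs2⟩, h⟩
    exact absurd (le_csSup hSbdd this) (not_le.mpr hs1)
  have ht₀lt : t₀ < t := by
    rcases lt_or_eq_of_le ht₀t with h | h
    · exact h
    · exact absurd hgt₀ (not_le.mpr (h ▸ hpos))
  -- g is antitone on [t₀, t]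
  have hanti : AntitoneOn g (Set.Icc t₀ t) := by
    apply antitoneOn_of_deriv_nonpos (convex_Icc t₀ t)
    · exact hgcont.mono (Set.Icc_subset_Icc ht₀0 le_rfl)
    · intro s hs
      rw [interior_Icc] at hs
      exact ((hderiv s (le_trans ht₀0 hs.1.le)).differentiableAt).differentiableWithinAt
    · intro s hs
      rw [interior_Icc] at hs
      have hs0 : (0:ℝ) ≤ s := le_trans ht₀0 hs.1.le
      rw [(hderiv s hs0).deriv]
      have hle := hdecr (x s) (hxX s hs0)
      have hβpos : 0 < β (g s) := by
        have := hβ.2.1 (hposafter s hs.1 hs.2.le)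
        rwa [hβ.2.2] at this
      linarith
  have := hanti ⟨le_rfl, ht₀lt.le⟩ ⟨ht₀lt.le, le_rfl⟩ ht₀lt.le
  linarith
end

section
/- Let X ⊆ ℝⁿ be closed, let f : ℝⁿ → ℝⁿ be continuous, let V : ℝⁿ → ℝ be continuously differentiable, and let β be an extended class-K function with ⟨∇V(x), f(x)⟩ ≤ −β(V(x)) for all x ∈ X. Define A = {x ∈ X : V(x) ≤ 0}. Then: (a) A is a closed subset of ℝⁿ; and (b) A is forward invariant along trajectories: for every differentiable curve x : [0,∞) → ℝⁿ with x'(t) = f(x(t)) and x(t) ∈ X for all t ≥ 0 and x(0) ∈ A, one has x(t) ∈ A for all t ≥ 0. -/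
open scoped RealInnerProductSpace

/-- The zero sublevel set `A = {x ∈ X : V x ≤ 0}` of a Lyapunov-like function is
(a) closed, and (b) forward invariant along every trajectory of `ẋ = f(x)` that
remains in `X`. -/
theorem sublevel_set_closed_and_forward_invariant {n : ℕ}
    (X : Set (EuclideanSpace ℝ (Fin n))) (hX : IsClosed X)
    (f : EuclideanSpace ℝ (Fin n) → EuclideanSpace ℝ (Fin n))
    (hf : Continuous f)
    (V : EuclideanSpace ℝ (Fin n) → ℝ) (hV : ContDiff ℝ 1 V)
    (β : ℝ → ℝ) (hβ : ExtendedClassK β)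
    (hdecr : ∀ x ∈ X, ⟪gradient V x, f x⟫ ≤ -β (V x)) :
    IsClosed {x ∈ X | V x ≤ 0} ∧
    (∀ x : ℝ → EuclideanSpace ℝ (Fin n),
      (∀ t : ℝ, 0 ≤ t → HasDerivAt x (f (x t)) t) →
      (∀ t : ℝ, 0 ≤ t → x t ∈ X) →
      x 0 ∈ {x ∈ X | V x ≤ 0} →
      ∀ t : ℝ, 0 ≤ t → x t ∈ {x ∈ X | V x ≤ 0}) := by
  obtain ⟨hβc, hβm, hβ0⟩ := hβ
  constructor
  · have : {x ∈ X | V x ≤ 0} = X ∩ V ⁻¹' Set.Iic 0 := rfl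
    rw [this]
    exact hX.inter (isClosed_Iic.preimage hV.continuous)
  · intro x hx hxX hx0 t ht
    refine ⟨hxX t ht, ?_⟩
    set g : ℝ → ℝ := fun t => V (x t) with hgdef
    have hg' : ∀ s : ℝ, 0 ≤ s →
        HasDerivAt g ⟪gradient V (x s), f (x s)⟫ s := fun s hs =>
      (hV.differentiable one_ne_zero (x s)).hasGradientAt.hasFDerivAt.comp_hasDerivAt s (hx s hs)
    by_contra hpos
    push_neg at hpos
    have hg0 : g 0 ≤ 0 := hx0.2
    have ht0 : (0:ℝ) < t := by
      rcases lt_or_eq_of_le ht with h | h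
      · exact h
      · rw [← h] at hpos; linarith
    set S : Set ℝ := {s | s ∈ Set.Icc 0 t ∧ g s ≤ 0} with hS
    have hSne : S.Nonempty := ⟨0, ⟨le_refl 0, le_of_lt ht0⟩, hg0⟩
    have hSbdd : BddAbove S := ⟨t, fun s hs => hs.1.2⟩
    set c := sSup S with hc
    have hcmem : c ∈ Set.Icc 0 t :=
      ⟨le_csSup hSbdd ⟨⟨le_refl 0, le_of_lt ht0⟩, hg0⟩,
        csSup_le hSne fun s hs => hs.1.2⟩
    have hgcont : ContinuousOn g (Set.Icc 0 t) := fun s hs =>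
      ((hg' s hs.1).continuousAt).continuousWithinAt
    have hgc : g c ≤ 0 := by
      have hScl : IsClosed S :=
        hgcont.preimage_isClosed_of_isClosed isClosed_Icc isClosed_Iic
      exact (hScl.csSup_mem hSne hSbdd).2
    have hct : c < t := by
      rcases lt_or_eq_of_le hcmem.2 with h | h
      · exact h
      · rw [h] at hgc; linarith
    -- g > 0 on (c, t]
    have hgpos : ∀ s, c < s → s ≤ t → 0 < g s := by
      intro s hcs hst
      by_contra h
      push_neg at h
      have : s ≤ c := le_csSup hSbdd ⟨⟨le_trans hcmem.1 (le_of_lt hcs), hst⟩, h⟩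
      linarith
    -- g strictly anti on [c, t]
    have hanti : StrictAntiOn g (Set.Icc c t) := by
      apply strictAntiOn_of_deriv_neg (convex_Icc c t)
        (hgcont.mono (Set.Icc_subset_Icc hcmem.1 le_rfl))
      intro s hs
      rw [interior_Icc] at hs
      have hs0 : (0:ℝ) ≤ s := le_trans hcmem.1 (le_of_lt hs.1)
      rw [(hg' s hs0).deriv]
      have h1 : ⟪gradient V (x s), f (x s)⟫ ≤ -β (g s) := hdecr (x s) (hxX s hs0)
      have h2 : 0 < β (g s) := by
        rw [← hβ0]; exact hβm (hgpos s hs.1 (le_of_lt hs.2))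
      linarith
    have := hanti ⟨le_rfl, le_of_lt hct⟩ ⟨le_of_lt hct, le_rfl⟩ hct
    linarith
end

section
/- Let β : ℝ → ℝ be strictly increasing with β(0) = 0, and let h : [0,∞) → ℝ be differentiable with h'(t) ≤ −β(h(t)) for all t ≥ 0. Then for every ε > 0 there exists T ≥ 0 such that h(t) ≤ ε for all t ≥ T. -/
/-- **Attractivity.** If `β : ℝ → ℝ` is strictly increasing with `β 0 = 0` and
`h : [0,∞) → ℝ` is differentiable with `h'(t) ≤ -β (h t)` for all `t ≥ 0`, then for
every `ε > 0` there exists `T ≥ 0` with `h t ≤ ε` for all `t ≥ T`. -/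
theorem eventually_below_every_positive_level
    (β : ℝ → ℝ) (hβ : StrictMono β) (hβ0 : β 0 = 0)
    (h h' : ℝ → ℝ)
    (hderiv : ∀ t : ℝ, 0 ≤ t → HasDerivAt h (h' t) t)
    (hineq : ∀ t : ℝ, 0 ≤ t → h' t ≤ -β (h t)) :
    ∀ ε : ℝ, 0 < ε → ∃ T : ℝ, 0 ≤ T ∧ ∀ t : ℝ, T ≤ t → h t ≤ ε := by
  intro ε hε
  have hβε : 0 < β ε := by
    have := hβ hε
    rwa [hβ0] at this
  have hcont : ∀ t : ℝ, 0 ≤ t → ContinuousAt h t := fun t ht => (hderiv t ht).continuousAt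
  -- Step 1: there is some time `t0 ≥ 0` with `h t0 ≤ ε`.
  have step1 : ∃ t0 : ℝ, 0 ≤ t0 ∧ h t0 ≤ ε := by
    by_contra hcon
    push_neg at hcon
    have hpos : 0 < (h 0 - ε) / β ε := div_pos (by linarith [hcon 0 le_rfl]) hβε
    set T : ℝ := (h 0 - ε) / β ε + 1 with hT
    have hT0 : 0 ≤ T := by rw [hT]; linarith
    have hdg : ∀ x : ℝ, 0 ≤ x → HasDerivAt (fun t => h t + β ε * t) (h' x + β ε) x := by
      intro x hx0
      have := (hderiv x hx0).add ((hasDerivAt_id x).const_mul (β ε))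
      simp only [id_eq, mul_one] at this
      exact this
    have hanti : AntitoneOn (fun t => h t + β ε * t) (Set.Icc 0 T) := by
      apply antitoneOn_of_deriv_nonpos (convex_Icc 0 T)
      · intro t ht
        exact (hdg t ht.1).continuousAt.continuousWithinAt
      · intro x hx
        rw [interior_Icc] at hx
        exact (hdg x (le_of_lt hx.1)).differentiableAt.differentiableWithinAt
      · intro x hx
        rw [interior_Icc] at hx
        have hx0 : 0 ≤ x := le_of_lt hx.1
        rw [(hdg x hx0).deriv]
        have h1 := hineq x hx0
        have h2 : β ε < β (h x) := hβ (hcon x hx0)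
        linarith
    have hle := hanti (Set.left_mem_Icc.2 hT0) (Set.right_mem_Icc.2 hT0) hT0
    simp only [mul_zero, add_zero] at hle
    have hεT : ε < h T := hcon T hT0
    have hmul : β ε * T = h 0 - ε + β ε := by
      rw [hT]; field_simp
    linarith
  obtain ⟨t0, ht0, hht0⟩ := step1
  refine ⟨t0, ht0, fun t1 ht1 => ?_⟩
  by_contra hgt
  push_neg at hgt
  have ht01 : t0 < t1 := by
    rcases lt_or_eq_of_le ht1 with h1 | h1
    · exact h1
    · exfalso; rw [h1] at hht0; linarith
  set S := Set.Icc t0 t1 ∩ h ⁻¹' Set.Iic ε with hS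
  have hSne : S.Nonempty := ⟨t0, ⟨le_rfl, le_of_lt ht01⟩, hht0⟩
  have hSbdd : BddAbove S := ⟨t1, fun x hx => hx.1.2⟩
  have hSclosed : IsClosed S := by
    apply ContinuousOn.preimage_isClosed_of_isClosed _ isClosed_Icc isClosed_Iic
    exact fun x hx => (hcont x (le_trans ht0 hx.1)).continuousWithinAt
  have hScompact : IsCompact S :=
    isCompact_Icc.of_isClosed_subset hSclosed Set.inter_subset_left
  have hsmem : sSup S ∈ S := hScompact.sSup_mem hSne
  set s := sSup S with hs
  have hst1 : s < t1 := lt_of_le_of_ne hsmem.1.2 (by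
    intro hEq
    have : h s ≤ ε := hsmem.2
    rw [hEq] at this; linarith)
  have hs0 : 0 ≤ s := le_trans ht0 hsmem.1.1
  have hanti : AntitoneOn h (Set.Icc s t1) := by
    apply antitoneOn_of_deriv_nonpos (convex_Icc s t1)
    · intro t ht
      exact (hcont t (le_trans hs0 ht.1)).continuousWithinAt
    · intro x hx
      rw [interior_Icc] at hx
      exact (hderiv x (le_trans hs0 (le_of_lt hx.1))).differentiableAt.differentiableWithinAt
    · intro x hx
      rw [interior_Icc] at hx
      have hx0 : 0 ≤ x := le_trans hs0 (le_of_lt hx.1)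
      rw [(hderiv x hx0).deriv]
      have hxε : ε < h x := by
        by_contra hle
        push_neg at hle
        have hxS : x ∈ S := ⟨⟨le_trans hsmem.1.1 (le_of_lt hx.1), le_of_lt hx.2⟩, hle⟩
        exact absurd (le_csSup hSbdd hxS) (not_le.2 hx.1)
      have h2 := hβ hxε
      have h3 := hineq x hx0
      linarith
  have h4 : h t1 ≤ h s := hanti (Set.left_mem_Icc.2 (le_of_lt hst1))
    (Set.right_mem_Icc.2 (le_of_lt hst1)) (le_of_lt hst1)
  have h5 : h s ≤ ε := hsmem.2
  linarith
end

section
/- Let β : ℝ → ℝ be strictly increasing with β(0) = 0, let ε > 0, and let h : [0,∞) → ℝ be differentiable with h'(t) ≤ −β(h(t)) for all t ≥ 0 and h(0) > ε. Then there exists T with 0 ≤ T ≤ h(0)/β(ε) such that h(T) ≤ ε. -/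
/-- **Hitting-time bound.** If `β : ℝ → ℝ` is strictly increasing with `β 0 = 0`,
`ε > 0`, and `h : [0,∞) → ℝ` is differentiable with `h'(t) ≤ -β (h t)` for all
`t ≥ 0` and `h 0 > ε`, then `h` drops to level `ε` within time `h 0 / β ε`. -/
theorem hitting_time_bound
    (β : ℝ → ℝ) (hβ : StrictMono β) (hβ0 : β 0 = 0)
    (ε : ℝ) (hε : 0 < ε)
    (h h' : ℝ → ℝ)
    (hderiv : ∀ t : ℝ, 0 ≤ t → HasDerivAt h (h' t) t)
    (hineq : ∀ t : ℝ, 0 ≤ t → h' t ≤ -β (h t))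
    (h0 : ε < h 0) :
    ∃ T : ℝ, 0 ≤ T ∧ T ≤ h 0 / β ε ∧ h T ≤ ε := by
  have hB : 0 < β ε := by
    have := hβ hε
    rwa [hβ0] at this
  set T₀ : ℝ := h 0 / β ε with hT₀
  have hT₀pos : 0 < T₀ := div_pos (lt_trans hε h0) hB
  by_contra hc
  push_neg at hc
  have hgt : ∀ t ∈ Set.Icc (0 : ℝ) T₀, ε < h t := fun t ht =>
    hc t ht.1 ht.2
  -- g t = h t + β ε * t is antitone on [0, T₀]
  set g : ℝ → ℝ := fun t => h t + β ε * t with hg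
  have hgderiv : ∀ t ∈ Set.Icc (0:ℝ) T₀, HasDerivAt g (h' t + β ε) t := by
    intro t ht
    exact (hderiv t ht.1).add (((hasDerivAt_id t).const_mul (β ε)).congr_deriv (mul_one _))
  have hanti : AntitoneOn g (Set.Icc 0 T₀) := by
    apply antitoneOn_of_deriv_nonpos (convex_Icc 0 T₀)
    · exact fun t ht => (hgderiv t ht).continuousAt.continuousWithinAt
    · intro t ht
      rw [interior_Icc] at ht
      exact (hgderiv t ⟨le_of_lt ht.1, le_of_lt ht.2⟩).differentiableAt.differentiableWithinAt
  -- deriv bound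
    · intro t ht
      rw [interior_Icc] at ht
      rw [(hgderiv t ⟨le_of_lt ht.1, le_of_lt ht.2⟩).deriv]
      have h1 : h' t ≤ -β (h t) := hineq t (le_of_lt ht.1)
      have h2 : β ε ≤ β (h t) :=
        le_of_lt (hβ (hgt t ⟨le_of_lt ht.1, le_of_lt ht.2⟩))
      linarith
  have key : g T₀ ≤ g 0 :=
    hanti (Set.left_mem_Icc.2 hT₀pos.le) (Set.right_mem_Icc.2 hT₀pos.le) hT₀pos.le
  have : h T₀ + β ε * T₀ ≤ h 0 := by simpa [hg] using key
  have hmul : β ε * T₀ = h 0 := by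
    rw [hT₀, mul_div_cancel₀ _ (ne_of_gt hB)]
  have hT0le : h T₀ ≤ 0 := by linarith
  have := hgt T₀ (Set.right_mem_Icc.2 hT₀pos.le)
  linarith
end
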